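/- Let p be an odd prime and G a finite group. Then G is p-stable if and only if for every non-cyclic p-subgroup Q of G the normalizer N_G(Q) is p-stable. -/

import Mathlib

/-- `O_p(G)`: the largest normal `p`-subgroup of `G`. -/
def pCore (p : ℕ) (G : Type*) [Group G] : Subgroup G :=
  sSup {N : Subgroup G | N.Normal ∧ IsPGroup p N}

instance relCent_normal {G : Type*} [Group G] (Q : Subgroup G) :
    ((Subgroup.centralizer (Q : Set G)).subgroupOf (Subgroup.normalizer (Q : Set G))).Normal := by
  rw [← Subgroup.normalizerMonoidHom_ker]
  exact MonoidHom.normal_ker _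

open scoped commutatorElement

/-- A group `G` is `p`-stable if for every `p`-subgroup `Q` and every `x ∈ N_G(Q)` with
`[[a,x],x] = 1` for all `a ∈ Q`, the image of `x` in `N_G(Q)/C_G(Q)` lies in
`O_p(N_G(Q)/C_G(Q))`. -/
def IsPStable (p : ℕ) (G : Type*) [Group G] : Prop :=
  ∀ Q : Subgroup G, IsPGroup p Q →
    ∀ x : (Subgroup.normalizer (Q : Set G)), (∀ a ∈ Q, ⁅⁅a, (x : G)⁆, (x : G)⁆ = 1) →
      (QuotientGroup.mk x :
          (Subgroup.normalizer (Q : Set G)) ⧸ (Subgroup.centralizer (Q : Set G)).subgroupOf (Subgroup.normalizer (Q : Set G))) ∈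
        pCore p ((Subgroup.normalizer (Q : Set G)) ⧸ (Subgroup.centralizer (Q : Set G)).subgroupOf (Subgroup.normalizer (Q : Set G)))

open Subgroup

variable {p : ℕ}

theorem mem_pCore_of_mem {G : Type*} [Group G] {N : Subgroup G} (hN : N.Normal)
    (hNp : IsPGroup p N) {x : G} (hx : x ∈ N) : x ∈ pCore p G :=
  le_sSup (show N ∈ {N : Subgroup G | N.Normal ∧ IsPGroup p N} from ⟨hN, hNp⟩) hx

theorem pCore_map_le {G H : Type*} [Group G] [Group H] (f : G →* H)
    (hf : Function.Surjective f) : (pCore p G).map f ≤ pCore p H := by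
  rw [pCore, (Subgroup.gc_map_comap f).l_sSup]
  refine iSup_le fun N => iSup_le fun hN => ?_
  exact le_sSup ⟨hN.1.map f hf, hN.2.map f⟩

theorem pCore_normal (G : Type*) [Group G] : (pCore p G).Normal := by
  constructor
  intro n hn g
  have h1 := pCore_map_le (p := p) (MulAut.conj g).toMonoidHom (MulAut.conj g).surjective
  have h2 : (MulAut.conj g) n ∈ (pCore p G).map (MulAut.conj g).toMonoidHom :=
    mem_map_of_mem _ hn
  simpa using h1 h2

theorem pCore_isPGroup (G : Type*) [Group G] [Finite G] (hp : p.Prime) :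
    IsPGroup p (pCore p G) := by
  haveI := Fact.mk hp
  obtain ⟨P⟩ : Nonempty (Sylow p G) := inferInstance
  have hle : pCore p G ≤ P := by
    refine sSup_le ?_
    rintro N ⟨hNorm, hNp⟩
    obtain ⟨Q, hQ⟩ := hNp.exists_le_sylow
    obtain ⟨g, hg⟩ := MulAction.exists_smul_eq G Q P
    intro n hn
    rw [← hg]
    show n ∈ ((g • Q : Sylow p G) : Subgroup G)
    rw [Sylow.smul_def, Sylow.pointwise_smul_def, Subgroup.mem_pointwise_smul_iff_inv_smul_mem]
    exact hQ (by simpa [MulAut.smul_def] using hNorm.conj_mem n hn g⁻¹)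
  exact P.2.to_le hle

theorem mem_pCore_of_injective {G H : Type*} [Group G] [Group H] [Finite H] (hp : p.Prime)
    (f : G →* H) (hf : Function.Injective f) {a : G} (ha : f a ∈ pCore p H) :
    a ∈ pCore p G := by
  refine mem_pCore_of_mem ((pCore_normal (p := p) H).comap f) ?_ (by simpa using ha)
  intro y
  obtain ⟨k, hk⟩ := pCore_isPGroup H hp ⟨f y.1, y.2⟩
  refine ⟨k, Subtype.ext (hf ?_)⟩
  have := congrArg Subtype.val hk
  simpa using this

theorem IsPStable.of_subgroup {G : Type*} [Group G] [Finite G] (hp : p.Prime)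
    (h : IsPStable p G) (H : Subgroup G) : IsPStable p H := by
  intro R hR x hx
  set R' : Subgroup G := R.map H.subtype with hR'def
  have hR' : IsPGroup p R' := hR.map _
  -- the inclusion of normalizers
  have hnorm : ∀ y : (normalizer (R : Set H)), ((y : H) : G) ∈ (normalizer (R' : Set G)) := by
    intro y
    rw [Subgroup.mem_normalizer_iff]
    intro g
    constructor
    · rintro ⟨b, hb, rfl⟩
      exact ⟨(y : H) * b * (y : H)⁻¹, (mem_normalizer_iff.mp y.2 b).mp hb, by simp [Subgroup.coe_subtype]⟩
    · rintro hg
      obtain ⟨b, hb, hbeq⟩ := hg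
      have hyb : ((y : H))⁻¹ * b * ((y : H)⁻¹)⁻¹ ∈ R :=
        (mem_normalizer_iff.mp (inv_mem y.2) b).mp hb
      refine ⟨((y : H))⁻¹ * b * (y : H), by simpa using hyb, ?_⟩
      have hb' : (b : G) = (y : H) * g * ((y : H) : G)⁻¹ := by
        simpa [Subgroup.coe_subtype] using hbeq
      simp only [Subgroup.coe_subtype]
      push_cast
      rw [hb']
      group
  let j : (normalizer (R : Set H)) →* (normalizer (R' : Set G)) :=
    { toFun := fun y => ⟨((y : H) : G), hnorm y⟩
      map_one' := rfl
      map_mul' := fun _ _ => rfl }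
  set C' : Subgroup (normalizer (R' : Set G)) := (centralizer (R' : Set G)).subgroupOf (normalizer (R' : Set G)) with hC'
  set C₀ : Subgroup (normalizer (R : Set H)) := (centralizer (R : Set H)).subgroupOf (normalizer (R : Set H)) with hC₀
  let F : (normalizer (R : Set H)) →* (normalizer (R' : Set G)) ⧸ C' := (QuotientGroup.mk' C').comp j
  have key : ∀ y : (normalizer (R : Set H)), F y = 1 ↔ y ∈ C₀ := by
    intro y
    rw [show F y = QuotientGroup.mk (j y) from rfl, QuotientGroup.eq_one_iff]
    constructor
    · intro hy
      rw [hC₀, mem_subgroupOf, mem_centralizer_iff]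
      intro b hb
      have := mem_centralizer_iff.mp ((mem_subgroupOf).mp hy) (b : G)
        ⟨b, hb, rfl⟩
      exact Subtype.ext (by push_cast; exact this)
    · intro hy
      rw [mem_subgroupOf, mem_centralizer_iff]
      rintro g ⟨b, hb, rfl⟩
      have := mem_centralizer_iff.mp ((mem_subgroupOf).mp hy) b hb
      have h2 := congrArg (Subtype.val) this
      push_cast at h2
      simp [Subgroup.coe_subtype] at h2 ⊢
      exact h2
  have hker : ∀ y ∈ C₀, F y = 1 := fun y hy => (key y).mpr hy
  let fbar : ((normalizer (R : Set H)) ⧸ C₀) →* ((normalizer (R' : Set G)) ⧸ C') := QuotientGroup.lift C₀ F hker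
  have hinj : Function.Injective fbar := by
    rw [injective_iff_map_eq_one]
    intro c hc
    induction c using QuotientGroup.induction_on with
    | H y =>
      rw [QuotientGroup.eq_one_iff]
      exact (key y).mp hc
  have hx' : ∀ a ∈ R', ⁅⁅a, ((j x : (normalizer (R' : Set G))) : G)⁆, ((j x : (normalizer (R' : Set G))) : G)⁆ = 1 := by
    rintro a ⟨b, hb, rfl⟩
    have := congrArg H.subtype (hx b hb)
    simp [map_commutatorElement] at this
    exact this
  have hconc := h R' hR' (j x) hx'
  have heq : fbar (QuotientGroup.mk x) = QuotientGroup.mk (j x) := rfl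
  exact mem_pCore_of_injective hp fbar hinj (by rw [heq]; exact hconc)

/-- A finite group `G` (`p` an odd prime) is `p`-stable if and only if the normalizer of
every non-cyclic `p`-subgroup of `G` is `p`-stable. -/
theorem pStable_iff_normalizers_pStable (p : ℕ) (hp : p.Prime) (hodd : Odd p)
    (G : Type*) [Group G] [Finite G] :
    IsPStable p G ↔
      ∀ Q : Subgroup G, IsPGroup p Q → ¬IsCyclic Q → IsPStable p (Subgroup.normalizer (Q : Set G)) := by
  constructor
  · intro h Q _ _
    exact h.of_subgroup hp _
  · intro h Q hQ x hx
    by_cases hcyc : IsCyclic Q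
    · -- cyclic case
      haveI := Fact.mk hp
      obtain ⟨n, hn⟩ := (IsPGroup.iff_card (p := p) (G := Q)).mp hQ
      let ψ : ((normalizer (Q : Set G)) ⧸ (centralizer (Q : Set G)).subgroupOf (normalizer (Q : Set G))) →* MulAut Q :=
        QuotientGroup.lift _ Q.normalizerMonoidHom (fun y hy => by
          rw [Subgroup.normalizerMonoidHom_ker]; exact hy)
      have hψinj : Function.Injective ψ := by
        rw [injective_iff_map_eq_one]
        intro c hc
        induction c using QuotientGroup.induction_on with
        | H y =>
          rw [QuotientGroup.eq_one_iff, ← Subgroup.normalizerMonoidHom_ker]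
          exact hc
      set φ : MulAut Q := Q.normalizerMonoidHom x with hφdef
      have hφ : ∀ a : Q, ((φ a : Q) : G) = x * a * (x : G)⁻¹ := by
        intro a
        simp [hφdef, Subgroup.normalizerMonoidHom]
        rfl
      obtain ⟨g, hg⟩ := hcyc.exists_generator
      have hQcomm : ∀ u v : (Q : Subgroup G), u * v = v * u := by
        intro u v
        obtain ⟨ku, rfl⟩ := Subgroup.mem_zpowers_iff.mp (hg u)
        obtain ⟨kv, rfl⟩ := Subgroup.mem_zpowers_iff.mp (hg v)
        rw [← zpow_add, ← zpow_add, add_comm]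
      have hfix : ∀ a : Q, φ (a * (φ a)⁻¹) = a * (φ a)⁻¹ := by
        intro a
        have hcom : Commute (⁅(a : G), (x : G)⁆) (x : G) :=
          commutatorElement_eq_one_iff_commute.mp (hx a a.2)
        apply Subtype.ext
        have hval : ((a * (φ a)⁻¹ : Q) : G) = ⁅(a : G), (x : G)⁆ := by
          push_cast
          rw [hφ a, commutatorElement_def]
          group
        rw [hφ (a * (φ a)⁻¹), hval]
        rw [hcom.symm.eq]
        group
      have hpow : ∀ (m : ℕ) (a : Q), (φ ^ m) a = a * ((a * (φ a)⁻¹)⁻¹) ^ m := by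
        intro m
        induction m with
        | zero => intro a; simp
        | succ m ih =>
          intro a
          have h1 : (φ ^ (m + 1)) a = φ ((φ ^ m) a) := by rw [pow_succ', MulAut.mul_apply]
          rw [h1, ih a, map_mul, map_pow, map_inv, hfix a]
          have h2 : a * (a * (φ a)⁻¹)⁻¹ = φ a := by
            rw [mul_inv_rev, inv_inv, hQcomm a _]
            group
          rw [pow_succ', ← mul_assoc, h2]
      have hφ1 : φ ^ (p ^ n) = 1 := by
        apply MulEquiv.ext
        intro a
        rw [hpow (p ^ n) a]
        have : (a * (φ a)⁻¹) ^ (p ^ n) = 1 := by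
          rw [← hn]; exact pow_card_eq_one'
        rw [inv_pow, this]
        simp
      have hψmk : ψ (QuotientGroup.mk x) = φ := rfl
      have hxord : (QuotientGroup.mk x :
          (normalizer (Q : Set G)) ⧸ (centralizer (Q : Set G)).subgroupOf (normalizer (Q : Set G))) ^ (p ^ n) = 1 := by
        apply hψinj
        rw [map_pow, map_one, hψmk, hφ1]
      have haut : ∀ σ τ : MulAut Q, σ * τ = τ * σ := by
        intro σ τ
        apply MulEquiv.ext
        intro a
        obtain ⟨m, rfl⟩ := Subgroup.mem_zpowers_iff.mp (hg a)
        obtain ⟨i, hi⟩ := Subgroup.mem_zpowers_iff.mp (hg (σ g))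
        obtain ⟨j, hj⟩ := Subgroup.mem_zpowers_iff.mp (hg (τ g))
        show σ (τ (g ^ m)) = τ (σ (g ^ m))
        have e1 : σ (τ (g ^ m)) = g ^ (i * (j * m)) := by
          rw [map_zpow, ← hj, ← zpow_mul, map_zpow, ← hi, ← zpow_mul]
        have e2 : τ (σ (g ^ m)) = g ^ (j * (i * m)) := by
          rw [map_zpow, ← hi, ← zpow_mul, map_zpow, ← hj, ← zpow_mul]
        rw [e1, e2, show i * (j * m) = j * (i * m) from by ring]
      have hHcomm : ∀ u v : ((normalizer (Q : Set G)) ⧸ (centralizer (Q : Set G)).subgroupOf (normalizer (Q : Set G))),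
          u * v = v * u := fun u v => hψinj (by rw [map_mul, map_mul, haut])
      have hZnormal : (Subgroup.zpowers (QuotientGroup.mk x :
          (normalizer (Q : Set G)) ⧸ (centralizer (Q : Set G)).subgroupOf (normalizer (Q : Set G)))).Normal := by
        constructor
        intro z hz gq
        simpa [hHcomm gq z, mul_assoc] using hz
      have hZp : IsPGroup p (Subgroup.zpowers (QuotientGroup.mk x :
          (normalizer (Q : Set G)) ⧸ (centralizer (Q : Set G)).subgroupOf (normalizer (Q : Set G)))) := by
        intro z
        obtain ⟨k, hk⟩ := Subgroup.mem_zpowers_iff.mp z.2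
        refine ⟨n, Subtype.ext ?_⟩
        push_cast
        rw [← hk, ← zpow_natCast, ← zpow_mul, mul_comm, zpow_mul, zpow_natCast, hxord, one_zpow]
      exact mem_pCore_of_mem hZnormal hZp (Subgroup.mem_zpowers _)
    · -- non-cyclic case
      have hst := h Q hQ hcyc
      have hR : IsPGroup p (Q.subgroupOf (normalizer (Q : Set G))) :=
        hQ.of_equiv (subgroupOfEquivOfLe le_normalizer).symm
      have hRtop : (normalizer ((Q.subgroupOf (normalizer (Q : Set G)) : Subgroup (normalizer (Q : Set G))) : Set (normalizer (Q : Set G)))) = ⊤ :=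
        normalizer_eq_top_iff.mpr inferInstance
      have hxmem : x ∈ (normalizer ((Q.subgroupOf (normalizer (Q : Set G)) : Subgroup (normalizer (Q : Set G))) : Set (normalizer (Q : Set G)))) := by rw [hRtop]; trivial
      have hx₀ : ∀ a ∈ Q.subgroupOf (normalizer (Q : Set G)),
          ⁅⁅a, ((⟨x, hxmem⟩ : (normalizer ((Q.subgroupOf (normalizer (Q : Set G)) : Subgroup (normalizer (Q : Set G))) : Set (normalizer (Q : Set G))))) : (normalizer (Q : Set G)))⁆,
            ((⟨x, hxmem⟩ : (normalizer ((Q.subgroupOf (normalizer (Q : Set G)) : Subgroup (normalizer (Q : Set G))) : Set (normalizer (Q : Set G))))) : (normalizer (Q : Set G)))⁆ = 1 := by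
        intro a ha
        apply Subtype.ext
        have : (normalizer (Q : Set G)).subtype ⁅⁅a, x⁆, x⁆ = 1 := by
          rw [map_commutatorElement, map_commutatorElement]
          exact hx (a : G) ((mem_subgroupOf).mp ha)
        exact this
      have hc := hst (Q.subgroupOf (normalizer (Q : Set G))) hR ⟨x, hxmem⟩ hx₀
      let F : (normalizer ((Q.subgroupOf (normalizer (Q : Set G)) : Subgroup (normalizer (Q : Set G))) : Set (normalizer (Q : Set G)))) →*
          (normalizer (Q : Set G)) ⧸ (centralizer (Q : Set G)).subgroupOf (normalizer (Q : Set G)) :=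
        (QuotientGroup.mk' _).comp (normalizer ((Q.subgroupOf (normalizer (Q : Set G)) : Subgroup (normalizer (Q : Set G))) : Set (normalizer (Q : Set G)))).subtype
      have hker : ∀ y ∈ (centralizer ((Q.subgroupOf (normalizer (Q : Set G)) : Subgroup (normalizer (Q : Set G))) :
          Set (normalizer (Q : Set G)))).subgroupOf (normalizer ((Q.subgroupOf (normalizer (Q : Set G)) : Subgroup (normalizer (Q : Set G))) : Set (normalizer (Q : Set G)))), F y = 1 := by
        intro y hy
        rw [show F y = QuotientGroup.mk (y : (normalizer (Q : Set G))) from rfl, QuotientGroup.eq_one_iff]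
        rw [mem_subgroupOf, mem_centralizer_iff]
        intro q hq
        have hqN : q ∈ (normalizer (Q : Set G)) := le_normalizer hq
        have hmem : (⟨q, hqN⟩ : (normalizer (Q : Set G))) ∈ Q.subgroupOf (normalizer (Q : Set G)) :=
          (mem_subgroupOf).mpr hq
        have h3 := mem_centralizer_iff.mp ((mem_subgroupOf).mp hy) ⟨q, hqN⟩ hmem
        have h4 := congrArg Subtype.val h3
        push_cast at h4
        exact h4
      let gbar := QuotientGroup.lift _ F hker
      have hsurj : Function.Surjective gbar := by
        intro c
        induction c using QuotientGroup.induction_on with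
        | H z =>
          have hz : z ∈ (normalizer ((Q.subgroupOf (normalizer (Q : Set G)) : Subgroup (normalizer (Q : Set G))) : Set (normalizer (Q : Set G)))) := by rw [hRtop]; trivial
          exact ⟨QuotientGroup.mk (⟨z, hz⟩ : (normalizer ((Q.subgroupOf (normalizer (Q : Set G)) : Subgroup (normalizer (Q : Set G))) : Set (normalizer (Q : Set G))))), rfl⟩
      have heq : gbar (QuotientGroup.mk ⟨x, hxmem⟩) = QuotientGroup.mk x := rfl
      exact heq ▸ pCore_map_le gbar hsurj (mem_map_of_mem gbar hc)
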